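/- Craig's formula: for x ≥ 0, Q(x) = (1/π)·∫₀^(π/2) exp(−x²/(2·sin²ψ)) dψ, where Q is the Gaussian tail function. -/

import Mathlib

open Real MeasureTheory

/-- Gaussian tail function Q(x) = (1/√(2π)) ∫ₓ^∞ e^(−t²/2) dt. -/
noncomputable def gaussQ (x : ℝ) : ℝ :=
  (1 / Real.sqrt (2 * π)) * ∫ t in Set.Ioi x, Real.exp (-t ^ 2 / 2)

open Set


-- substitution lemma
lemma subst_lemma {x : ℝ} (hx : 0 < x) :
    ∫ ψ in Ioo 0 (π/2), (x / Real.sin ψ ^ 2) * Real.exp (-(x^2) / (2 * Real.sin ψ ^ 2))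
      = Real.sqrt (2*π) / 2 * Real.exp (-x^2/2) := by
  have hs : MeasurableSet (Ioo (0:ℝ) (π/2)) := measurableSet_Ioo
  set f : ℝ → ℝ := fun ψ => x * (Real.cos ψ / Real.sin ψ) with hf
  have hsin : ∀ ψ ∈ Ioo (0:ℝ) (π/2), 0 < Real.sin ψ := fun ψ hψ =>
    Real.sin_pos_of_pos_of_lt_pi hψ.1 (hψ.2.trans (by linarith [pi_pos]))
  have hcos : ∀ ψ ∈ Ioo (0:ℝ) (π/2), 0 < Real.cos ψ := fun ψ hψ =>
    Real.cos_pos_of_mem_Ioo ⟨by linarith [hψ.1, pi_pos], hψ.2⟩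
  have hf' : ∀ ψ ∈ Ioo (0:ℝ) (π/2),
      HasDerivWithinAt f (-(x / Real.sin ψ ^ 2)) (Ioo 0 (π/2)) ψ := by
    intro ψ hψ
    have hsψ := (hsin ψ hψ).ne'
    have h1 : HasDerivAt (fun ψ => Real.cos ψ / Real.sin ψ)
        ((-Real.sin ψ * Real.sin ψ - Real.cos ψ * Real.cos ψ) / Real.sin ψ ^ 2) ψ :=
      (Real.hasDerivAt_cos ψ).div (Real.hasDerivAt_sin ψ) hsψ
    have h2 := h1.const_mul x
    have h3 : -Real.sin ψ * Real.sin ψ - Real.cos ψ * Real.cos ψ = -1 := by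
      nlinarith [Real.sin_sq_add_cos_sq ψ]
    have e : -(x / Real.sin ψ ^ 2) = x * ((-Real.sin ψ * Real.sin ψ - Real.cos ψ * Real.cos ψ) / Real.sin ψ ^ 2) := by
      rw [h3]; ring
    rw [e]; exact h2.hasDerivWithinAt
  have hinj : InjOn f (Ioo 0 (π/2)) := by
    intro a ha b hb hab
    have hta : Real.tan a ≠ 0 := ne_of_gt (Real.tan_pos_of_pos_of_lt_pi_div_two ha.1 ha.2)
    have htb : Real.tan b ≠ 0 := ne_of_gt (Real.tan_pos_of_pos_of_lt_pi_div_two hb.1 hb.2)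
    have hca : Real.cos a / Real.sin a = 1 / Real.tan a := by
      rw [Real.tan_eq_sin_div_cos]; field_simp
    have hcb : Real.cos b / Real.sin b = 1 / Real.tan b := by
      rw [Real.tan_eq_sin_div_cos]; field_simp
    have : Real.tan a = Real.tan b := by
      rw [hf] at hab
      simp only [hca, hcb] at hab
      have h := mul_left_cancel₀ hx.ne' hab
      rw [one_div, one_div, inv_inj] at h
      exact h
    exact Real.injOn_tan ⟨by linarith [ha.1, pi_pos], ha.2⟩ ⟨by linarith [hb.1, pi_pos], hb.2⟩ this
  have himg : f '' Ioo 0 (π/2) = Ioi 0 := by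
    ext u
    constructor
    · rintro ⟨ψ, hψ, rfl⟩
      exact mul_pos hx (div_pos (hcos ψ hψ) (hsin ψ hψ))
    · intro hu
      have hu' : (0:ℝ) < u := hu
      have hpos : 0 < x / u := div_pos hx hu'
      have hmem : Real.arctan (x/u) ∈ Ioo (0:ℝ) (π/2) :=
        ⟨by simpa using Real.arctan_strictMono hpos, Real.arctan_lt_pi_div_two _⟩
      refine ⟨Real.arctan (x/u), hmem, ?_⟩
      have hsψ := (hsin _ hmem).ne'
      have htan : Real.tan (Real.arctan (x/u)) = x/u := Real.tan_arctan _
      rw [Real.tan_eq_sin_div_cos] at htan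
      have hcψ := (hcos _ hmem).ne'
      show x * (Real.cos (Real.arctan (x/u)) / Real.sin (Real.arctan (x/u))) = u
      field_simp at htan ⊢
      nlinarith [htan]
  have key := integral_image_eq_integral_abs_deriv_smul hs hf' hinj
      (fun u => Real.exp (-(x^2+u^2)/2))
  rw [himg] at key
  have lhs_eq : (∫ u in Ioi (0:ℝ), Real.exp (-(x^2+u^2)/2))
      = Real.exp (-x^2/2) * (Real.sqrt (2*π) / 2) := by
    have h1 : ∀ u : ℝ, Real.exp (-(x^2+u^2)/2)
        = Real.exp (-x^2/2) * Real.exp (-(1/2:ℝ) * u^2) := by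
      intro u; rw [← Real.exp_add]; ring_nf
    simp_rw [h1]
    rw [MeasureTheory.integral_const_mul, integral_gaussian_Ioi]
    rw [Real.sqrt_mul (by norm_num : (0:ℝ) ≤ 2) π]
    norm_num
    ring
  have rhs_eq : (∫ ψ in Ioo (0:ℝ) (π/2),
        |(-(x / Real.sin ψ ^ 2))| • Real.exp (-(x^2 + f ψ^2)/2))
      = ∫ ψ in Ioo (0:ℝ) (π/2),
        (x / Real.sin ψ ^ 2) * Real.exp (-(x^2) / (2 * Real.sin ψ ^ 2)) := by
    apply MeasureTheory.setIntegral_congr_fun hs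
    intro ψ hψ
    have h1 : 0 < Real.sin ψ := hsin ψ hψ
    have habs : |(-(x / Real.sin ψ ^ 2))| = x / Real.sin ψ ^ 2 := by
      rw [abs_neg, abs_of_pos (div_pos hx (by positivity))]
    have hexp : -(x^2 + f ψ^2)/2 = -(x^2) / (2 * Real.sin ψ ^ 2) := by
      show -(x^2 + (x * (Real.cos ψ / Real.sin ψ))^2)/2 = _
      have hid := Real.sin_sq_add_cos_sq ψ
      show -(x^2 + (x * (Real.cos ψ / Real.sin ψ))^2)/2 = _
      rw [div_eq_div_iff (by norm_num) (by positivity)]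
      field_simp
      linear_combination (-1:ℝ) * hid
    simp only [habs, hexp, smul_eq_mul]
  rw [lhs_eq, rhs_eq] at key
  rw [← key]; ring

lemma meas_aux (x : ℝ) :
    AEStronglyMeasurable (fun ψ : ℝ => Real.exp (-(x^2) / (2 * Real.sin ψ ^ 2)))
      (volume.restrict (Set.uIoc (0:ℝ) (π/2))) := by
  apply Measurable.aestronglyMeasurable
  fun_prop

lemma meas_aux' (x : ℝ) :
    AEStronglyMeasurable (fun ψ : ℝ =>
        (-(x / Real.sin ψ ^ 2)) * Real.exp (-(x^2) / (2 * Real.sin ψ ^ 2)))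
      (volume.restrict (Set.uIoc (0:ℝ) (π/2))) := by
  apply Measurable.aestronglyMeasurable
  fun_prop

lemma int_aux (x : ℝ) :
    IntervalIntegrable (fun ψ : ℝ => Real.exp (-(x^2) / (2 * Real.sin ψ ^ 2)))
      volume 0 (π/2) := by
  apply IntervalIntegrable.mono_fun' (g := fun _ => (1:ℝ))
      intervalIntegrable_const (meas_aux x)
  filter_upwards with ψ
  simp only [norm_eq_abs, abs_exp]
  rw [Real.exp_le_one_iff]
  apply div_nonpos_of_nonpos_of_nonneg (neg_nonpos.2 (by positivity)) (by positivity)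

lemma hasDerivAt_R {x₀ : ℝ} (hx : 0 < x₀) :
    HasDerivAt (fun x => ∫ ψ in (0:ℝ)..(π/2), Real.exp (-(x^2) / (2 * Real.sin ψ ^ 2)))
      (∫ ψ in (0:ℝ)..(π/2),
        (-(x₀ / Real.sin ψ ^ 2)) * Real.exp (-(x₀^2) / (2 * Real.sin ψ ^ 2))) x₀ := by
  have hεpos : 0 < x₀/2 := by linarith
  have hmain := intervalIntegral.hasDerivAt_integral_of_dominated_loc_of_deriv_le
    (F := fun x ψ => Real.exp (-(x^2) / (2 * Real.sin ψ ^ 2)))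
    (F' := fun x ψ => (-(x / Real.sin ψ ^ 2)) * Real.exp (-(x^2) / (2 * Real.sin ψ ^ 2)))
    (x₀ := x₀) (a := 0) (b := π/2) (μ := volume)
    (bound := fun _ => 12/x₀) (Metric.ball_mem_nhds x₀ hεpos)
    (Filter.Eventually.of_forall fun x => meas_aux x)
    (int_aux x₀) (meas_aux' x₀) ?_ intervalIntegrable_const ?_
  · exact hmain.2
  · -- bound
    filter_upwards with ψ hψ x hxball
    have hψ' : ψ ∈ Ioc (0:ℝ) (π/2) := by
      rwa [Set.uIoc_of_le (by positivity)] at hψ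
    have hsin : 0 < Real.sin ψ := Real.sin_pos_of_pos_of_lt_pi hψ'.1
      (lt_of_le_of_lt hψ'.2 (by linarith [pi_pos]))
    set s := Real.sin ψ ^ 2 with hs
    have hspos : 0 < s := by positivity
    rw [Metric.mem_ball, Real.dist_eq] at hxball
    have hxlo : x₀/2 < x := by
      have := abs_lt.1 hxball; linarith [this.1]
    have hxhi : x < 3*x₀/2 := by
      have := abs_lt.1 hxball; linarith [this.2]
    have hxpos : 0 < x := by linarith
    rw [norm_mul, norm_neg, norm_div]
    simp only [norm_eq_abs, abs_exp, abs_of_pos hxpos, abs_of_pos hspos]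
    have hexp_le : Real.exp (-(x^2)/(2*s)) ≤ Real.exp (-(x₀^2)/(8*s)) := by
      apply Real.exp_le_exp.2
      rw [div_le_div_iff₀ (by positivity) (by positivity)]
      have hx2 : x₀^2 ≤ 4 * x^2 := by nlinarith
      nlinarith [mul_le_mul_of_nonneg_left hx2 hspos.le]
    have e2pos : 0 < Real.exp (-(x₀^2)/(8*s)) := Real.exp_pos _
    set t := x₀^2/(8*s) with ht
    have htpos : 0 < t := by positivity
    have h1 : t * Real.exp (-t) ≤ 1 := by
      rw [Real.exp_neg, mul_inv_le_iff₀ (Real.exp_pos t), one_mul]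
      linarith [Real.add_one_le_exp t]
    have hkey : (1/s) * Real.exp (-(x₀^2)/(8*s)) ≤ 8/x₀^2 := by
      have hrw : (1/s) * Real.exp (-(x₀^2)/(8*s)) = (8/x₀^2) * (t * Real.exp (-t)) := by
        rw [ht, neg_div]
        field_simp
      rw [hrw]
      calc (8/x₀^2) * (t * Real.exp (-t)) ≤ (8/x₀^2) * 1 :=
            mul_le_mul_of_nonneg_left h1 (by positivity)
        _ = 8/x₀^2 := mul_one _
    calc x/s * Real.exp (-(x^2)/(2*s))
        ≤ x/s * Real.exp (-(x₀^2)/(8*s)) :=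
          mul_le_mul_of_nonneg_left hexp_le (by positivity)
      _ ≤ (3*x₀/2)/s * Real.exp (-(x₀^2)/(8*s)) := by
          apply mul_le_mul_of_nonneg_right _ e2pos.le
          gcongr

      _ = (3*x₀/2) * ((1/s) * Real.exp (-(x₀^2)/(8*s))) := by ring
      _ ≤ (3*x₀/2) * (8/x₀^2) := mul_le_mul_of_nonneg_left hkey (by positivity)
      _ = 12/x₀ := by field_simp; ring
  · -- differentiability
    filter_upwards with ψ hψ x hxball
    have hψ' : ψ ∈ Ioc (0:ℝ) (π/2) := by
      rwa [Set.uIoc_of_le (by positivity)] at hψ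
    have hsin : Real.sin ψ ≠ 0 := (Real.sin_pos_of_pos_of_lt_pi hψ'.1
      (lt_of_le_of_lt hψ'.2 (by linarith [pi_pos]))).ne'
    have h1 : HasDerivAt (fun x : ℝ => -(x^2) / (2 * Real.sin ψ ^ 2))
        (-(2*x) / (2 * Real.sin ψ ^ 2)) x := by
      simpa using ((hasDerivAt_pow 2 x).neg.div_const (2 * Real.sin ψ ^ 2))
    have h2 := h1.exp
    show HasDerivAt _ (-(x / Real.sin ψ ^ 2) * Real.exp (-(x^2) / (2 * Real.sin ψ ^ 2))) x
    rw [show -(x / Real.sin ψ ^ 2) * Real.exp (-(x^2) / (2 * Real.sin ψ ^ 2))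
      = Real.exp (-(x^2) / (2 * Real.sin ψ ^ 2)) * (-(2*x) / (2 * Real.sin ψ ^ 2)) by ring]
    exact h2

noncomputable def gaussQ' (x : ℝ) : ℝ :=
  (1 / Real.sqrt (2 * π)) * ∫ t in Set.Ioi x, Real.exp (-t ^ 2 / 2)

lemma hg_int : Integrable (fun t : ℝ => Real.exp (-t ^ 2 / 2)) := by
  have h := integrable_exp_neg_mul_sq (show (0:ℝ) < 1/2 by norm_num)
  have he : (fun t : ℝ => Real.exp (-t ^ 2 / 2)) = fun t => Real.exp (-(1/2 : ℝ) * t ^ 2) := by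
    funext t; ring_nf
  rw [he]; exact h

lemma I0_val : ∫ t in Ioi (0:ℝ), Real.exp (-t ^ 2 / 2) = Real.sqrt (2 * π) / 2 := by
  have he : (fun t : ℝ => Real.exp (-t ^ 2 / 2)) = fun t => Real.exp (-(1/2 : ℝ) * t ^ 2) := by
    funext t; ring_nf
  rw [he, integral_gaussian_Ioi]
  rw [Real.sqrt_mul (by norm_num : (0:ℝ) ≤ 2) π]
  norm_num
  ring

lemma gaussQ'_eq {x : ℝ} (hx : 0 ≤ x) :
    gaussQ' x = (1 / Real.sqrt (2 * π)) *
      ((∫ t in Ioi (0:ℝ), Real.exp (-t ^ 2 / 2)) - ∫ t in (0:ℝ)..x, Real.exp (-t ^ 2 / 2)) := by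
  unfold gaussQ'
  congr 1
  rw [intervalIntegral.integral_of_le hx]
  have hu : Ioc 0 x ∪ Ioi x = Ioi (0:ℝ) := Ioc_union_Ioi_eq_Ioi hx
  rw [← hu, MeasureTheory.setIntegral_union (Ioc_disjoint_Ioi le_rfl) measurableSet_Ioi
    hg_int.integrableOn hg_int.integrableOn]
  ring

lemma hasDerivAt_Q {x₀ : ℝ} (hx : 0 < x₀) :
    HasDerivAt gaussQ'
      (-(1 / Real.sqrt (2 * π) * Real.exp (-x₀ ^ 2 / 2))) x₀ := by
  have hF : HasDerivAt (fun u : ℝ => ∫ t in (0:ℝ)..u, Real.exp (-t ^ 2 / 2))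
      (Real.exp (-x₀ ^ 2 / 2)) x₀ := by
    have hc : Continuous fun t : ℝ => Real.exp (-t ^ 2 / 2) := by fun_prop
    exact intervalIntegral.integral_hasDerivAt_right hg_int.intervalIntegrable
      (hc.stronglyMeasurableAtFilter _ _) hc.continuousAt
  have h2 : HasDerivAt (fun u : ℝ => (1 / Real.sqrt (2 * π)) *
      ((∫ t in Ioi (0:ℝ), Real.exp (-t ^ 2 / 2)) - ∫ t in (0:ℝ)..u, Real.exp (-t ^ 2 / 2)))
      (-(1 / Real.sqrt (2 * π) * Real.exp (-x₀ ^ 2 / 2))) x₀ := by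
    have := ((hasDerivAt_const x₀ (∫ t in Ioi (0:ℝ), Real.exp (-t ^ 2 / 2))).sub hF).const_mul
      (1 / Real.sqrt (2 * π))
    rw [show -(1 / Real.sqrt (2 * π) * Real.exp (-x₀ ^ 2 / 2))
      = 1 / Real.sqrt (2 * π) * (0 - Real.exp (-x₀ ^ 2 / 2)) by ring]
    exact this
  apply h2.congr_of_eventuallyEq
  filter_upwards [eventually_ge_nhds hx] with y hy
  exact gaussQ'_eq hy

lemma tendsto_Q : Filter.Tendsto gaussQ' Filter.atTop (nhds 0) := by
  have h1 : Filter.Tendsto (fun x : ℝ => ∫ t in (0:ℝ)..x, Real.exp (-t ^ 2 / 2))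
      Filter.atTop (nhds (∫ t in Ioi (0:ℝ), Real.exp (-t ^ 2 / 2))) :=
    MeasureTheory.intervalIntegral_tendsto_integral_Ioi 0 hg_int.integrableOn Filter.tendsto_id
  have h2 : Filter.Tendsto (fun x : ℝ => (1 / Real.sqrt (2 * π)) *
      ((∫ t in Ioi (0:ℝ), Real.exp (-t ^ 2 / 2)) - ∫ t in (0:ℝ)..x, Real.exp (-t ^ 2 / 2)))
      Filter.atTop (nhds 0) := by
    have := ((tendsto_const_nhds (x := (∫ t in Ioi (0:ℝ), Real.exp (-t ^ 2 / 2)))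
      (f := Filter.atTop (α := ℝ))).sub h1).const_mul (1 / Real.sqrt (2 * π))
    simpa using this
  apply h2.congr'
  filter_upwards [Filter.eventually_ge_atTop (0:ℝ)] with y hy
  exact (gaussQ'_eq hy).symm

noncomputable def craigR (x : ℝ) : ℝ :=
  (1 / π) * ∫ ψ in (0:ℝ)..(π / 2), Real.exp (-(x ^ 2) / (2 * Real.sin ψ ^ 2))

lemma hasDerivAt_craigR {x₀ : ℝ} (hx : 0 < x₀) :
    HasDerivAt craigR (-(1 / Real.sqrt (2 * π) * Real.exp (-x₀ ^ 2 / 2))) x₀ := by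
  have h := (hasDerivAt_R hx).const_mul (1 / π)
  have hval : (1 / π) * ∫ ψ in (0:ℝ)..(π/2),
      (-(x₀ / Real.sin ψ ^ 2)) * Real.exp (-(x₀^2) / (2 * Real.sin ψ ^ 2))
      = -(1 / Real.sqrt (2 * π) * Real.exp (-x₀ ^ 2 / 2)) := by
    rw [intervalIntegral.integral_of_le (by positivity), integral_Ioc_eq_integral_Ioo]
    have : ∫ ψ in Ioo (0:ℝ) (π/2),
        (-(x₀ / Real.sin ψ ^ 2)) * Real.exp (-(x₀^2) / (2 * Real.sin ψ ^ 2))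
        = -∫ ψ in Ioo (0:ℝ) (π/2),
          (x₀ / Real.sin ψ ^ 2) * Real.exp (-(x₀^2) / (2 * Real.sin ψ ^ 2)) := by
      rw [← MeasureTheory.integral_neg]
      congr 1; funext ψ; ring
    rw [this, subst_lemma hx]
    have hπ : (0:ℝ) < π := pi_pos
    have hs : Real.sqrt (2*π) * Real.sqrt (2*π) = 2*π :=
      Real.mul_self_sqrt (by positivity)
    have h2 : Real.sqrt (2*π) / (2*π) = 1 / Real.sqrt (2*π) := by
      rw [div_eq_div_iff (by positivity) (by positivity), one_mul, hs]
    rw [← h2]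
    ring
  rw [hval] at h
  exact h

lemma craigR_nonneg (b : ℝ) : 0 ≤ craigR b := by
  unfold craigR
  apply mul_nonneg (by positivity)
  apply intervalIntegral.integral_nonneg (by positivity)
  intro ψ _
  exact (Real.exp_pos _).le

lemma craigR_le (b : ℝ) : craigR b ≤ (1/2) * Real.exp (-b^2/2) := by
  unfold craigR
  have h1 : (∫ ψ in (0:ℝ)..(π/2), Real.exp (-(b ^ 2) / (2 * Real.sin ψ ^ 2)))
      ≤ (π/2) * Real.exp (-b^2/2) := by
    rw [intervalIntegral.integral_of_le (by positivity)]
    have hle : (∫ ψ in Ioc (0:ℝ) (π/2), Real.exp (-(b ^ 2) / (2 * Real.sin ψ ^ 2)))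
        ≤ ∫ _ψ in Ioc (0:ℝ) (π/2), Real.exp (-b^2/2) := by
      apply MeasureTheory.setIntegral_mono_on
      · exact (intervalIntegrable_iff_integrableOn_Ioc_of_le (by positivity)).1 (int_aux b)
      · exact integrableOn_const measure_Ioc_lt_top.ne
      · exact measurableSet_Ioc
      · intro ψ hψ
        have hsin : 0 < Real.sin ψ := Real.sin_pos_of_pos_of_lt_pi hψ.1
          (lt_of_le_of_lt hψ.2 (by linarith [pi_pos]))
        apply Real.exp_le_exp.2
        rw [neg_div, neg_div, neg_le_neg_iff]
        have hs1 : Real.sin ψ ^ 2 ≤ 1 := Real.sin_sq_le_one ψ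
        gcongr <;> nlinarith [hsin, hs1]
    calc (∫ ψ in Ioc (0:ℝ) (π/2), Real.exp (-(b ^ 2) / (2 * Real.sin ψ ^ 2)))
        ≤ ∫ _ψ in Ioc (0:ℝ) (π/2), Real.exp (-b^2/2) := hle
      _ = (π/2) * Real.exp (-b^2/2) := by
          rw [MeasureTheory.setIntegral_const, Real.volume_real_Ioc_of_le (by positivity), smul_eq_mul,
            sub_zero]
  calc (1/π) * ∫ ψ in (0:ℝ)..(π/2), Real.exp (-(b ^ 2) / (2 * Real.sin ψ ^ 2))
      ≤ (1/π) * ((π/2) * Real.exp (-b^2/2)) :=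
        mul_le_mul_of_nonneg_left h1 (by positivity)
    _ = (1/2) * Real.exp (-b^2/2) := by
        field_simp

lemma tendsto_craigR : Filter.Tendsto craigR Filter.atTop (nhds 0) := by
  have hb2 : Filter.Tendsto (fun b : ℝ => b^2/2) Filter.atTop Filter.atTop := by
    apply Filter.Tendsto.atTop_div_const (by norm_num)
    exact Filter.tendsto_pow_atTop (by norm_num)
  have hexp : Filter.Tendsto (fun b : ℝ => (1/2) * Real.exp (-b^2/2))
      Filter.atTop (nhds 0) := by
    have h := (Real.tendsto_exp_neg_atTop_nhds_zero.comp hb2).const_mul (1/2 : ℝ)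
    simp only [mul_zero] at h
    convert h using 2 with b
    simp [Function.comp, neg_div]
  apply tendsto_of_tendsto_of_tendsto_of_le_of_le tendsto_const_nhds hexp
    (fun b => craigR_nonneg b) (fun b => craigR_le b)

theorem craig_formula' (x : ℝ) (hx : 0 ≤ x) : gaussQ' x = craigR x := by
  rcases eq_or_lt_of_le hx with h0 | hpos
  · rw [← h0]
    have hs : (0:ℝ) < Real.sqrt (2*π) := Real.sqrt_pos.2 (by positivity)
    have hQ : gaussQ' 0 = 1/2 := by
      unfold gaussQ'
      rw [I0_val]
      field_simp
    have hR : craigR 0 = 1/2 := by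
      unfold craigR
      have h1 : ∀ ψ : ℝ, Real.exp (-((0:ℝ) ^ 2) / (2 * Real.sin ψ ^ 2)) = 1 := by
        intro ψ; norm_num
      simp_rw [h1]
      rw [intervalIntegral.integral_const]
      have hπ : π ≠ 0 := Real.pi_ne_zero
      field_simp
      simp only [smul_eq_mul, mul_one, mul_zero, sub_zero]
      ring
    rw [hQ, hR]
  · have key : ∀ b, x < b → gaussQ' b - craigR b = gaussQ' x - craigR x := by
      intro b hb
      have hcont : ContinuousOn (fun y => gaussQ' y - craigR y) (Icc x b) := by
        intro y hy
        have hy0 : 0 < y := lt_of_lt_of_le hpos hy.1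
        exact (((hasDerivAt_Q hy0).sub (hasDerivAt_craigR hy0)).continuousAt).continuousWithinAt
      have hder : ∀ y ∈ Ioo x b, HasDerivAt (fun y => gaussQ' y - craigR y)
          ((fun _ => (0:ℝ)) y) y := by
        intro y hy
        have hy0 : 0 < y := lt_trans hpos hy.1
        have := (hasDerivAt_Q hy0).sub (hasDerivAt_craigR hy0)
        rw [sub_self] at this
        exact this
      obtain ⟨c, _, hc⟩ := exists_hasDerivAt_eq_slope _ _ hb hcont hder
      have h3 := hc.symm
      rw [div_eq_zero_iff] at h3
      rcases h3 with h3 | h3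
      · linarith [h3]
      · exact absurd h3 (sub_ne_zero.2 (ne_of_gt hb))
    have heq : (fun b => gaussQ' b - craigR b) =ᶠ[Filter.atTop]
        (fun _ : ℝ => gaussQ' x - craigR x) := by
      filter_upwards [Filter.eventually_gt_atTop x] with b hb
      exact key b hb
    have ht : Filter.Tendsto (fun _ : ℝ => gaussQ' x - craigR x) Filter.atTop (nhds 0) := by
      have h1 := Filter.Tendsto.congr' heq (tendsto_Q.sub tendsto_craigR)
      simpa using h1
    have h2 := tendsto_nhds_unique ht tendsto_const_nhds
    linarith


/-- Craig's formula: Q(x) = (1/π) ∫₀^{π/2} exp(−x²/(2 sin²ψ)) dψ for x ≥ 0. -/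
theorem craig_formula (x : ℝ) (hx : 0 ≤ x) :
    gaussQ x = (1 / π) * ∫ ψ in (0:ℝ)..(π / 2), Real.exp (-(x ^ 2) / (2 * Real.sin ψ ^ 2)) := by
  have h : gaussQ x = gaussQ' x := rfl
  rw [h, craig_formula' x hx]
  rfl
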